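/- Let 𝒲₊ ⊆ ℝ^{Nx×Ny} be the cone of nonnegative linear combinations of finitely many fixed matrices w_1,…,w_R with nonnegative entries, let Û ∈ ℝ^{Nx×N} and V̂ ∈ ℝ^{Ny×M} be matrices, and let μ ∈ ℝ^{Nx}, ν ∈ ℝ^{Ny} be probability vectors. If the all-ones vector 𝟙_{Nx} is one of the columns of Û, or the all-ones vector 𝟙_{Ny} is one of the columns of V̂, then the feasible set F := {Π ∈ 𝒲₊ : Ûᵀ(Π·𝟙_{Ny}) = Ûᵀμ and V̂ᵀ(Πᵀ·𝟙_{Nx}) = V̂ᵀν} is a compact subset of ℝ^{Nx×Ny}. -/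

import Mathlib

open scoped BigOperators

theorem stmt9 {Nx Ny N M R : ℕ} (hNx : 0 < Nx) (hNy : 0 < Ny)
    (hN : 0 < N) (hM : 0 < M) (hR : 0 < R)
    (w : Fin R → Matrix (Fin Nx) (Fin Ny) ℝ)
    (hw : ∀ r i j, 0 ≤ w r i j)
    (U : Matrix (Fin Nx) (Fin N) ℝ) (V : Matrix (Fin Ny) (Fin M) ℝ)
    (μ : Fin Nx → ℝ) (ν : Fin Ny → ℝ)
    (hμ : (∀ i, 0 ≤ μ i) ∧ ∑ i, μ i = 1)
    (hν : (∀ j, 0 ≤ ν j) ∧ ∑ j, ν j = 1)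
    (hones : (∃ n : Fin N, ∀ i, U i n = 1) ∨ (∃ m : Fin M, ∀ j, V j m = 1)) :
    IsCompact {P : Matrix (Fin Nx) (Fin Ny) ℝ |
      (∃ c : Fin R → ℝ, (∀ r, 0 ≤ c r) ∧ P = ∑ r, c r • w r)
      ∧ (∀ n : Fin N, ∑ i, U i n * (∑ j, P i j) = ∑ i, U i n * μ i)
      ∧ (∀ m : Fin M, ∑ j, V j m * (∑ i, P i j) = ∑ j, V j m * ν j)} := by
  classical
  set F : (Fin R → ℝ) → Matrix (Fin Nx) (Fin Ny) ℝ := fun c => ∑ r, c r • w r with hF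
  have hFc : Continuous F := by
    apply continuous_finset_sum
    intro r _
    exact (continuous_apply r).smul continuous_const
  have hFe : ∀ c i j, F c i j = ∑ r, c r * w r i j := by
    intro c i j
    simp [hF, Finset.sum_apply, Matrix.sum_apply]
  set mass : Fin R → ℝ := fun r => ∑ i, ∑ j, w r i j with hm
  have hmass0 : ∀ r, 0 ≤ mass r := fun r =>
    Finset.sum_nonneg fun i _ => Finset.sum_nonneg fun j _ => hw r i j
  have hmass : ∀ c, ∑ i, ∑ j, F c i j = ∑ r, c r * mass r := by
    intro c
    simp only [hFe, hm, Finset.mul_sum]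
    exact (Finset.sum_congr rfl fun i _ => Finset.sum_comm).trans Finset.sum_comm
  set B : Fin R → ℝ := fun r => if w r = 0 then 0 else 1 / mass r with hB
  set K : Set (Fin R → ℝ) := {c |
      (∀ r, c r ∈ Set.Icc (0:ℝ) (B r))
      ∧ (∀ n : Fin N, ∑ i, U i n * (∑ j, F c i j) = ∑ i, U i n * μ i)
      ∧ (∀ m : Fin M, ∑ j, V j m * (∑ i, F c i j) = ∑ j, V j m * ν j)} with hKdef
  have hcontij : ∀ i j, Continuous fun c => F c i j :=
    fun i j => (continuous_apply j).comp ((continuous_apply i).comp hFc)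
  have hK : IsCompact K := by
    have h1 : IsCompact (Set.pi Set.univ fun r => Set.Icc (0:ℝ) (B r)) :=
      isCompact_univ_pi fun r => isCompact_Icc
    have hA : IsClosed (⋂ n : Fin N,
        {c : Fin R → ℝ | ∑ i, U i n * (∑ j, F c i j) = ∑ i, U i n * μ i}) :=
      isClosed_iInter fun n => isClosed_eq
        (continuous_finset_sum _ fun i _ =>
          continuous_const.mul (continuous_finset_sum _ fun j _ => hcontij i j))
        continuous_const
    have hBcl : IsClosed (⋂ m : Fin M,
        {c : Fin R → ℝ | ∑ j, V j m * (∑ i, F c i j) = ∑ j, V j m * ν j}) :=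
      isClosed_iInter fun m => isClosed_eq
        (continuous_finset_sum _ fun j _ =>
          continuous_const.mul (continuous_finset_sum _ fun i _ => hcontij i j))
        continuous_const
    have h2 : IsClosed {c : Fin R → ℝ |
        (∀ n : Fin N, ∑ i, U i n * (∑ j, F c i j) = ∑ i, U i n * μ i)
        ∧ (∀ m : Fin M, ∑ j, V j m * (∑ i, F c i j) = ∑ j, V j m * ν j)} := by
      have h' := hA.inter hBcl
      convert h' using 1
      ext c
      simp [Set.mem_iInter]
    have hKeq : K = (Set.pi Set.univ fun r => Set.Icc (0:ℝ) (B r)) ∩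
        {c : Fin R → ℝ |
        (∀ n : Fin N, ∑ i, U i n * (∑ j, F c i j) = ∑ i, U i n * μ i)
        ∧ (∀ m : Fin M, ∑ j, V j m * (∑ i, F c i j) = ∑ j, V j m * ν j)} := by
      ext c
      constructor
      · rintro ⟨h0, ha, hb⟩
        exact ⟨fun r _ => h0 r, ha, hb⟩
      · rintro ⟨h0, ha, hb⟩
        exact ⟨fun r => h0 r (Set.mem_univ r), ha, hb⟩
    rw [hKeq]
    exact h1.inter_right h2
  have hset : {P : Matrix (Fin Nx) (Fin Ny) ℝ |
      (∃ c : Fin R → ℝ, (∀ r, 0 ≤ c r) ∧ P = ∑ r, c r • w r)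
      ∧ (∀ n : Fin N, ∑ i, U i n * (∑ j, P i j) = ∑ i, U i n * μ i)
      ∧ (∀ m : Fin M, ∑ j, V j m * (∑ i, P i j) = ∑ j, V j m * ν j)} = F '' K := by
    ext P
    constructor
    · rintro ⟨⟨c, hc0, hcP⟩, hU, hV⟩
      set c' : Fin R → ℝ := fun r => if w r = 0 then 0 else c r with hc'
      have hPc' : F c' = P := by
        rw [hcP, hF]
        refine Finset.sum_congr rfl fun r _ => ?_
        by_cases h : w r = 0
        · simp [hc', h]
        · simp [hc', h]
      have hPmass : ∑ i, ∑ j, P i j = 1 := by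
        rcases hones with ⟨n, hn⟩ | ⟨m, hm⟩
        · have h := hU n
          simp only [hn, one_mul] at h
          rw [h, hμ.2]
        · have h := hV m
          simp only [hm, one_mul] at h
          exact Finset.sum_comm.trans (h.trans hν.2)
      have hc'mass : ∑ r, c' r * mass r = 1 := by
        rw [← hmass c', hPc', hPmass]
      refine ⟨c', ⟨?_, ?_, ?_⟩, hPc'⟩
      · intro r
        by_cases h : w r = 0
        · simp [hc', hB, h]
        · have hij : ∃ i j, w r i j ≠ 0 := by
            by_contra hh
            push_neg at hh
            exact h (by ext i j; simpa using hh i j)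
          obtain ⟨i, j, hij⟩ := hij
          have hpos : 0 < mass r := by
            have h1 : w r i j ≤ ∑ j', w r i j' :=
              Finset.single_le_sum (fun j' _ => hw r i j') (Finset.mem_univ j)
            have h2 : ∑ j', w r i j' ≤ mass r :=
              Finset.single_le_sum
                (fun i' _ => Finset.sum_nonneg fun j' _ => hw r i' j')
                (Finset.mem_univ i)
            have : 0 < w r i j := lt_of_le_of_ne (hw r i j) (Ne.symm hij)
            linarith
          have hle : c' r * mass r ≤ 1 := by
            rw [← hc'mass]
            exact Finset.single_le_sum
              (fun s _ => mul_nonneg (by by_cases hs : w s = 0 <;> simp [hc', hs, hc0 s])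
                (hmass0 s))
              (Finset.mem_univ r)
          constructor
          · simpa [hc', h] using hc0 r
          · simp only [hB, h, if_false]
            rw [le_div_iff₀ hpos]
            exact hle
      · intro n
        simp only [hPc']
        exact hU n
      · intro m
        simp only [hPc']
        exact hV m
    · rintro ⟨c, ⟨hc, hU, hV⟩, rfl⟩
      exact ⟨⟨c, fun r => (hc r).1, rfl⟩, hU, hV⟩
  rw [hset]
  exact hK.image hFc
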